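/- arXiv:2511.11413 — 7 statements merged into one kernel-verified Lean document; each statement's English description precedes it below -/
import Mathlib

section
/- Let X be a finite type (contexts) with a probability mass function μ, E a finite type (edges) of cardinality m, and y : X → E → [0,1] the true edge weights. Let C be a finite set of decision rules, where each c ∈ C maps a weight vector in [0,1]^E to a matching (a set of edges); let c⋆ be a rule such that for every weight vector w, c⋆(w) maximizes ∑_{e ∈ M} w e over all matchings M. Let γ, γ̂ : X → E → [0,1] be predictors and α ≥ 0. Suppose: (a) for every c ∈ C, |E_{x∼μ}[ ∑_{e ∈ c(γ(x))} (y x e − γ̂ x e) ]| ≤ α·m, and (b) |E_{x∼μ}[ ∑_{e ∈ c⋆(γ̂(x))} (y x e − γ̂ x e) ]| ≤ α·m. Then for every c ∈ C: E_{x∼μ}[ ∑_{e ∈ c(γ(x))} y x e ] ≤ 2·α·m + E_{x∼μ}[ ∑_{e ∈ c⋆(γ̂(x))} y x e ]. -/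
/-- Theorem 3.1: multicalibration of γ̂ w.r.t. the family induced by C, γ and c⋆, γ̂
implies that the optimal rule c⋆ on γ̂ is competitive with any rule c ∈ C on γ,
up to additive error 2·α·m. -/
theorem multicalibration_matching
    {X E : Type*} [Fintype X] [Fintype E]
    (μ : X → ℝ) (hμ0 : ∀ x, 0 ≤ μ x) (hμ1 : ∑ x, μ x = 1)
    (y : X → E → ℝ) (hy : ∀ x e, y x e ∈ Set.Icc (0:ℝ) 1)
    (isMatching : Finset E → Prop)
    (C : Finset ((E → ℝ) → Finset E))
    (hC : ∀ c ∈ C, ∀ w : E → ℝ, isMatching (c w))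
    (cstar : (E → ℝ) → Finset E)
    (hcstarM : ∀ w : E → ℝ, isMatching (cstar w))
    (hcstarOpt : ∀ (w : E → ℝ) (M : Finset E), isMatching M →
      ∑ e ∈ M, w e ≤ ∑ e ∈ cstar w, w e)
    (γ γhat : X → E → ℝ)
    (hγ : ∀ x e, γ x e ∈ Set.Icc (0:ℝ) 1)
    (hγhat : ∀ x e, γhat x e ∈ Set.Icc (0:ℝ) 1)
    (α : ℝ) (hα : 0 ≤ α)
    (ha : ∀ c ∈ C,
      |∑ x, μ x * ∑ e ∈ c (γ x), (y x e - γhat x e)| ≤ α * (Fintype.card E))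
    (hb : |∑ x, μ x * ∑ e ∈ cstar (γhat x), (y x e - γhat x e)| ≤ α * (Fintype.card E)) :
    ∀ c ∈ C,
      ∑ x, μ x * ∑ e ∈ c (γ x), y x e ≤
        2 * α * (Fintype.card E) + ∑ x, μ x * ∑ e ∈ cstar (γhat x), y x e := by
  intro c hc
  have h1 := abs_le.mp (ha c hc)
  have h2 := abs_le.mp hb
  have key : ∑ x, μ x * ∑ e ∈ c (γ x), γhat x e ≤
      ∑ x, μ x * ∑ e ∈ cstar (γhat x), γhat x e := by
    apply Finset.sum_le_sum
    intro x _
    exact mul_le_mul_of_nonneg_left (hcstarOpt (γhat x) (c (γ x)) (hC c hc (γ x))) (hμ0 x)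
  have e1 : ∑ x, μ x * ∑ e ∈ c (γ x), (y x e - γhat x e) =
      ∑ x, μ x * ∑ e ∈ c (γ x), y x e - ∑ x, μ x * ∑ e ∈ c (γ x), γhat x e := by
    rw [← Finset.sum_sub_distrib]
    congr 1; ext x; rw [← mul_sub, ← Finset.sum_sub_distrib]
  have e2 : ∑ x, μ x * ∑ e ∈ cstar (γhat x), (y x e - γhat x e) =
      ∑ x, μ x * ∑ e ∈ cstar (γhat x), y x e -
        ∑ x, μ x * ∑ e ∈ cstar (γhat x), γhat x e := by
    rw [← Finset.sum_sub_distrib]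
    congr 1; ext x; rw [← mul_sub, ← Finset.sum_sub_distrib]
  rw [e1] at h1
  rw [e2] at h2
  linarith [h1.2, h2.1, key]
end

section
/- With the setup of the previous statement (finite context space X with pmf μ, predictors γ, γ̂ : X → E → [0,1], finite class C of rules, optimal rule c⋆), if γ̂ satisfies the two multicalibration conditions with parameter α = ε/(2m) where m = |E|, then max_{c ∈ C} E_{x∼μ}[ ∑_{e ∈ c(γ(x))} y x e ] ≤ ε + E_{x∼μ}[ ∑_{e ∈ c⋆(γ̂(x))} y x e ]. -/
/-- Theorem 3.1 with α = ε/(2m): the max over C of the expected weight obtained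
by c on γ is at most ε plus the expected weight obtained by c⋆ on γ̂. -/
theorem multicalibration_matching_eps
    {X E : Type*} [Fintype X] [Fintype E]
    (μ : X → ℝ) (hμ0 : ∀ x, 0 ≤ μ x) (hμ1 : ∑ x, μ x = 1)
    (y : X → E → ℝ) (hy : ∀ x e, y x e ∈ Set.Icc (0:ℝ) 1)
    (isMatching : Finset E → Prop)
    (C : Finset ((E → ℝ) → Finset E)) (hCne : C.Nonempty)
    (hC : ∀ c ∈ C, ∀ w : E → ℝ, isMatching (c w))
    (cstar : (E → ℝ) → Finset E)
    (hcstarM : ∀ w : E → ℝ, isMatching (cstar w))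
    (hcstarOpt : ∀ (w : E → ℝ) (M : Finset E), isMatching M →
      ∑ e ∈ M, w e ≤ ∑ e ∈ cstar w, w e)
    (γ γhat : X → E → ℝ)
    (hγ : ∀ x e, γ x e ∈ Set.Icc (0:ℝ) 1)
    (hγhat : ∀ x e, γhat x e ∈ Set.Icc (0:ℝ) 1)
    (ε α : ℝ) (hε : ε ∈ Set.Ioo (0:ℝ) 1) (hm : 0 < Fintype.card E)
    (hαdef : α = ε / (2 * (Fintype.card E)))
    (ha : ∀ c ∈ C,
      |∑ x, μ x * ∑ e ∈ c (γ x), (y x e - γhat x e)| ≤ α * (Fintype.card E))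
    (hb : |∑ x, μ x * ∑ e ∈ cstar (γhat x), (y x e - γhat x e)| ≤ α * (Fintype.card E)) :
    (C.sup' hCne fun c => ∑ x, μ x * ∑ e ∈ c (γ x), y x e) ≤
      ε + ∑ x, μ x * ∑ e ∈ cstar (γhat x), y x e := by
  have hαm : α * (Fintype.card E) = ε / 2 := by
    rw [hαdef]; field_simp
  rw [Finset.sup'_le_iff]
  intro c hc
  have h1 := (abs_le.mp (ha c hc)).2
  have h2 := (abs_le.mp hb).1
  have key : ∀ x, μ x * ∑ e ∈ c (γ x), γhat x e ≤
      μ x * ∑ e ∈ cstar (γhat x), γhat x e := fun x =>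
    mul_le_mul_of_nonneg_left (hcstarOpt (γhat x) _ (hC c hc (γ x))) (hμ0 x)
  have hmid : ∑ x, μ x * ∑ e ∈ c (γ x), γhat x e ≤
      ∑ x, μ x * ∑ e ∈ cstar (γhat x), γhat x e :=
    Finset.sum_le_sum fun x _ => key x
  have expand : ∀ (f : X → Finset E),
      ∑ x, μ x * ∑ e ∈ f x, (y x e - γhat x e) =
      (∑ x, μ x * ∑ e ∈ f x, y x e) - ∑ x, μ x * ∑ e ∈ f x, γhat x e := by
    intro f
    rw [← Finset.sum_sub_distrib]
    congr 1; ext x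
    rw [Finset.sum_sub_distrib, mul_sub]
  rw [expand] at h1 h2
  linarith [hmid]
end

section
/- There exist a probability distribution D on contexts X = [0,1] (uniform), two deterministic actions with values v₁ = 1 and v₂ = 1/ε for ε ∈ (0,1), and a predictor γ : [0,1] → ℝ² with γ₁(x) = 1 for all x, γ₂(x) = 1/ε² if x ≤ ε and γ₂(x) = 0 otherwise, such that: (i) γ is unbiased, i.e., E_x[γ_i(x)] = v_i for i = 1,2; (ii) the probability that γ₂(x) > γ₁(x) (i.e., the argmax rule selects the better action 2) equals ε; (iii) the expected value obtained by the argmax rule applied to γ is 1·(1−ε) + (1/ε)·ε = 2 − ε, whereas the constant rule 'always pick action 2' obtains value 1/ε, which exceeds 2 − ε for all ε < 1. -/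
open MeasureTheory

/-- The introductory counterexample: an unbiased predictor on which the argmax rule
is arbitrarily suboptimal compared to the constant rule "always pick action 2". -/
theorem unbiased_argmax_suboptimal
    (ε : ℝ) (hε : ε ∈ Set.Ioo (0:ℝ) 1)
    (v : Fin 2 → ℝ) (hv1 : v 0 = 1) (hv2 : v 1 = 1 / ε)
    (γ : ℝ → Fin 2 → ℝ)
    (hγ1 : ∀ x, γ x 0 = 1)
    (hγ2 : ∀ x, γ x 1 = if x ≤ ε then 1 / ε ^ 2 else 0) :
    -- (i) γ is unbiased over the uniform context distribution on [0,1]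
    (∀ i : Fin 2, ∫ x in Set.Icc (0:ℝ) 1, γ x i = v i) ∧
    -- (ii) the argmax rule picks the better action 2 with probability ε
    (volume {x | x ∈ Set.Icc (0:ℝ) 1 ∧ γ x 0 < γ x 1} = ENNReal.ofReal ε) ∧
    -- (iii) the argmax rule earns 2 - ε in expectation, dominated by the constant rule
    (∫ x in Set.Icc (0:ℝ) 1, (if γ x 0 < γ x 1 then v 1 else v 0) = 2 - ε) ∧
    (2 - ε < 1 / ε) := by
  obtain ⟨hε0, hε1⟩ := hε
  have hcap : Set.Icc (0:ℝ) 1 ∩ Set.Iic ε = Set.Icc 0 ε := by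
    ext x
    simp only [Set.mem_inter_iff, Set.mem_Icc, Set.mem_Iic]
    constructor
    · rintro ⟨⟨h1, _⟩, h3⟩; exact ⟨h1, h3⟩
    · rintro ⟨h1, h3⟩; exact ⟨⟨h1, h3.trans hε1.le⟩, h3⟩
  have hlt : (1:ℝ) < 1 / ε ^ 2 := by
    rw [lt_div_iff₀ (by positivity)]
    nlinarith
  refine ⟨?_, ?_, ?_, ?_⟩
  · intro i
    fin_cases i
    · show ∫ x in Set.Icc (0:ℝ) 1, γ x 0 = v 0
      simp only [hγ1, hv1, setIntegral_const]
      rw [Real.volume_real_Icc]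
      norm_num
    · show ∫ x in Set.Icc (0:ℝ) 1, γ x 1 = v 1
      have heq : ∀ x, γ x 1 = Set.indicator (Set.Iic ε) (fun _ => 1 / ε ^ 2) x := by
        intro x
        rw [hγ2]
        by_cases h : x ≤ ε
        · rw [if_pos h, Set.indicator_of_mem (Set.mem_Iic.mpr h)]
        · rw [if_neg h, Set.indicator_of_notMem (by simpa using h)]
      simp only [heq]
      rw [setIntegral_indicator measurableSet_Iic, hcap, setIntegral_const,
        Real.volume_real_Icc, hv2]
      rw [max_eq_left (by linarith), smul_eq_mul]
      field_simp
      ring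
  · have hset : {x | x ∈ Set.Icc (0:ℝ) 1 ∧ γ x 0 < γ x 1} = Set.Icc 0 ε := by
      rw [← hcap]
      ext x
      simp only [Set.mem_setOf_eq, hγ1, hγ2, Set.mem_inter_iff, Set.mem_Iic]
      constructor
      · rintro ⟨h1, h2⟩
        refine ⟨h1, ?_⟩
        by_contra h
        rw [if_neg h] at h2
        linarith
      · rintro ⟨h1, h2⟩
        rw [if_pos h2]
        exact ⟨h1, hlt⟩
    rw [hset, Real.volume_Icc, sub_zero]
  · have heq : ∀ x, (if γ x 0 < γ x 1 then v 1 else v 0)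
        = 1 + Set.indicator (Set.Iic ε) (fun _ => 1 / ε - 1) x := by
      intro x
      rw [hγ1, hγ2]
      by_cases h : x ≤ ε
      · rw [if_pos h, if_pos hlt, hv2, Set.indicator_of_mem (Set.mem_Iic.mpr h)]
        ring
      · rw [if_neg h, if_neg (by norm_num), hv1, Set.indicator_of_notMem (by simpa using h)]
        ring
    simp only [heq]
    rw [integral_add (integrableOn_const (by simp [Real.volume_Icc]) :
        IntegrableOn (fun _ => (1:ℝ)) (Set.Icc (0:ℝ) 1) volume)
      ((integrableOn_const (by simp [Real.volume_Icc]) :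
        IntegrableOn (fun _ => 1 / ε - 1) (Set.Icc (0:ℝ) 1) volume).indicator
        measurableSet_Iic)]
    rw [setIntegral_indicator measurableSet_Iic, hcap, setIntegral_const, setIntegral_const,
      Real.volume_real_Icc, Real.volume_real_Icc]
    rw [max_eq_left (by linarith), max_eq_left (by linarith), smul_eq_mul, smul_eq_mul]
    field_simp
    ring
  · rw [lt_div_iff₀ hε0]
    nlinarith
end

section
/- Let X be a finite type with pmf μ, let g⋆ : X → ℝ^m denote the Bayes predictor (any fixed function), and let γ̂ : X → [0,1]^m be a current predictor. Suppose w : X → {0,1}^m is a weight function, b ∈ {−1, +1}, and η > 0, with b · E_{x∼μ}[⟨w(x), g⋆(x) − γ̂(x)⟩] ≥ (α/2)·m. Define γ̂' (x) = proj_{[0,1]^m}( γ̂(x) + η · b · w(x) ), the coordinatewise clamp to [0,1]. Then the potential φ(f) = E_{x∼μ}[ ‖f(x) − g⋆(x)‖₂² ] satisfies φ(γ̂) − φ(γ̂') ≥ α·m·η − η²·m, provided g⋆ takes values in [0,1]^m. In particular, with η = α/2, φ(γ̂) − φ(γ̂') ≥ m·α²/4. -/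
/-- Potential-decrease step of Theorem 3.2: one projected gradient step along a
violated multicalibration direction decreases the mean-square-error potential by
at least α·m·η − η²·m (and by m·α²/4 when η = α/2). -/
theorem potential_decrease_step
    {X : Type*} [Fintype X] {m : ℕ}
    (μ : X → ℝ) (hμ0 : ∀ x, 0 ≤ μ x) (hμ1 : ∑ x, μ x = 1)
    (gstar γhat : X → Fin m → ℝ)
    (hgstar : ∀ x i, gstar x i ∈ Set.Icc (0:ℝ) 1)
    (hγhat : ∀ x i, γhat x i ∈ Set.Icc (0:ℝ) 1)
    (w : X → Fin m → ℝ) (hw : ∀ x i, w x i = 0 ∨ w x i = 1)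
    (b : ℝ) (hb : b = -1 ∨ b = 1)
    (η α : ℝ) (hη : 0 < η) (hα : 0 < α)
    (hviol : b * ∑ x, μ x * ∑ i, w x i * (gstar x i - γhat x i) ≥ (α / 2) * m)
    (γhat' : X → Fin m → ℝ)
    (hproj : ∀ x i, γhat' x i = min (max (γhat x i + η * b * w x i) 0) 1)
    (φ : (X → Fin m → ℝ) → ℝ)
    (hφ : ∀ f, φ f = ∑ x, μ x * ∑ i, (f x i - gstar x i) ^ 2) :
    φ γhat - φ γhat' ≥ α * m * η - η ^ 2 * m ∧
      (η = α / 2 → φ γhat - φ γhat' ≥ m * α ^ 2 / 4) := by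
  have key : ∀ x i, (γhat' x i - gstar x i)^2 ≤
      (γhat x i - gstar x i)^2 - 2*η*b*(w x i * (gstar x i - γhat x i)) + η^2 := by
    intro x i
    have hg := hgstar x i
    rw [hproj x i]
    set v := γhat x i + η * b * w x i with hv
    have hclamp : (min (max v 0) 1 - gstar x i)^2 ≤ (v - gstar x i)^2 := by
      rcases le_total v 0 with h0 | h0
      · rw [max_eq_right h0, min_eq_left (by norm_num : (0:ℝ) ≤ 1)]
        nlinarith [hg.1, hg.2]
      · rw [max_eq_left h0]
        rcases le_total v 1 with h1 | h1
        · rw [min_eq_left h1]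
        · rw [min_eq_right h1]
          nlinarith [hg.1, hg.2]
    refine hclamp.trans ?_
    have hb2 : b^2 = 1 := by rcases hb with h|h <;> rw [h] <;> norm_num
    rcases hw x i with h|h <;> rw [hv, h] <;> nlinarith [sq_nonneg η]
  have hsum : ∀ x, ∑ i, (γhat' x i - gstar x i)^2 ≤
      ∑ i, (γhat x i - gstar x i)^2
        - 2*η*b*(∑ i, w x i * (gstar x i - γhat x i)) + η^2 * m := by
    intro x
    calc ∑ i, (γhat' x i - gstar x i)^2
        ≤ ∑ i, ((γhat x i - gstar x i)^2 - 2*η*b*(w x i * (gstar x i - γhat x i)) + η^2) :=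
          Finset.sum_le_sum fun i _ => key x i
      _ = _ := by
          rw [Finset.sum_add_distrib, Finset.sum_sub_distrib, ← Finset.mul_sum,
            Finset.sum_const, Finset.card_univ, Fintype.card_fin, nsmul_eq_mul]
          ring
  have h1 : ∑ x, μ x * ∑ i, (γhat' x i - gstar x i)^2 ≤
      ∑ x, μ x * (∑ i, (γhat x i - gstar x i)^2
        - 2*η*b*(∑ i, w x i * (gstar x i - γhat x i)) + η^2 * m) :=
    Finset.sum_le_sum fun x _ => mul_le_mul_of_nonneg_left (hsum x) (hμ0 x)
  have h2 : ∑ x, μ x * (∑ i, (γhat x i - gstar x i)^2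
        - 2*η*b*(∑ i, w x i * (gstar x i - γhat x i)) + η^2 * m)
      = (∑ x, μ x * ∑ i, (γhat x i - gstar x i)^2)
        - 2*η*b*(∑ x, μ x * ∑ i, w x i * (gstar x i - γhat x i)) + η^2 * m := by
    simp only [mul_sub, mul_add]
    rw [Finset.sum_add_distrib, Finset.sum_sub_distrib]
    congr 1
    · congr 1
      rw [Finset.mul_sum]
      exact Finset.sum_congr rfl fun x _ => by ring
    · rw [← Finset.sum_mul, hμ1, one_mul]
  have hmain : φ γhat - φ γhat' ≥
      2*η*(b*∑ x, μ x * ∑ i, w x i * (gstar x i - γhat x i)) - η^2*m := by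
    rw [hφ γhat, hφ γhat']
    rw [h2] at h1
    nlinarith [h1]
  have hstep : 2*η*((α/2)*m) ≤
      2*η*(b*∑ x, μ x * ∑ i, w x i * (gstar x i - γhat x i)) :=
    mul_le_mul_of_nonneg_left hviol (by positivity)
  constructor
  · nlinarith [hmain, hstep]
  · intro h
    subst h
    nlinarith [hmain, hstep]
end

section
/- Best-action setting as a special case: let there be k actions with contexts x ∈ X (finite, with pmf μ) and values y : X → [0,1]^k. Let C be a finite set of selection rules c : [0,1]^k → Fin k, and let c⋆(v) = argmax_i v_i. Let γ, γ̂ : X → [0,1]^k satisfy: for each c ∈ C, |E_x[ y_{c(γ(x))}(x) − γ̂_{c(γ(x))}(x) ]| ≤ α·k, and |E_x[ y_{c⋆(γ̂(x))}(x) − γ̂_{c⋆(γ̂(x))}(x) ]| ≤ α·k. Then for every c ∈ C, E_x[ y_{c(γ(x))}(x) ] ≤ 2·α·k + E_x[ y_{c⋆(γ̂(x))}(x) ]. -/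
/-- Best-action special case of Theorem 3.1: with k actions, multicalibration of γ̂
with respect to the rules in C (on γ) and the argmax rule c⋆ (on γ̂) implies the
argmax on γ̂ is competitive with every rule in C on γ, up to 2·α·k. -/
theorem multicalibration_best_action
    {X : Type*} [Fintype X] {k : ℕ} [NeZero k]
    (μ : X → ℝ) (hμ0 : ∀ x, 0 ≤ μ x) (hμ1 : ∑ x, μ x = 1)
    (y : X → Fin k → ℝ) (hy : ∀ x i, y x i ∈ Set.Icc (0:ℝ) 1)
    (C : Finset ((Fin k → ℝ) → Fin k))
    (cstar : (Fin k → ℝ) → Fin k)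
    (hcstar : ∀ (v : Fin k → ℝ) (i : Fin k), v i ≤ v (cstar v))
    (γ γhat : X → Fin k → ℝ)
    (hγ : ∀ x i, γ x i ∈ Set.Icc (0:ℝ) 1)
    (hγhat : ∀ x i, γhat x i ∈ Set.Icc (0:ℝ) 1)
    (α : ℝ) (hα : 0 ≤ α)
    (ha : ∀ c ∈ C, |∑ x, μ x * (y x (c (γ x)) - γhat x (c (γ x)))| ≤ α * k)
    (hb : |∑ x, μ x * (y x (cstar (γhat x)) - γhat x (cstar (γhat x)))| ≤ α * k) :
    ∀ c ∈ C,
      ∑ x, μ x * y x (c (γ x)) ≤ 2 * α * k + ∑ x, μ x * y x (cstar (γhat x)) := by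
  intro c hc
  have h1 := (abs_le.mp (ha c hc)).2
  have h2 := (abs_le.mp hb).1
  have h3 : ∑ x, μ x * γhat x (c (γ x)) ≤ ∑ x, μ x * γhat x (cstar (γhat x)) :=
    Finset.sum_le_sum fun x _ => mul_le_mul_of_nonneg_left (hcstar (γhat x) _) (hμ0 x)
  have e1 : ∑ x, μ x * (y x (c (γ x)) - γhat x (c (γ x)))
      = ∑ x, μ x * y x (c (γ x)) - ∑ x, μ x * γhat x (c (γ x)) := by
    rw [← Finset.sum_sub_distrib]; congr 1; ext x; ring
  have e2 : ∑ x, μ x * (y x (cstar (γhat x)) - γhat x (cstar (γhat x)))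
      = ∑ x, μ x * y x (cstar (γhat x)) - ∑ x, μ x * γhat x (cstar (γhat x)) := by
    rw [← Finset.sum_sub_distrib]; congr 1; ext x; ring
  rw [e1] at h1; rw [e2] at h2
  nlinarith
end

section
/- Matroid generalization: let M be a matroid on ground set E (|E| = n elements) with rank r, X a finite context space with pmf μ, y : X → E → [0,1] the element values, C a finite set of rules mapping weight vectors in [0,1]^E to independent sets of M, and c⋆ a rule outputting a maximum-weight independent set (equivalently base, as weights are nonnegative) for its input. Suppose γ̂ satisfies, for all c ∈ C, |E_x[ ∑_{e ∈ c(γ(x))} (y x e − γ̂ x e) ]| ≤ α·r, and also |E_x[ ∑_{e ∈ c⋆(γ̂(x))} (y x e − γ̂ x e) ]| ≤ α·r. Then for all c ∈ C, E_x[ ∑_{e ∈ c(γ(x))} y x e ] ≤ 2·α·r + E_x[ ∑_{e ∈ c⋆(γ̂(x))} y x e ]. In particular, setting α = ε/(2r) gives additive error ε. -/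
/-- Matroid (max-weight base) generalization of Theorem 3.1: with independent sets of
rank at most r, multicalibration with parameter α gives additive error 2·α·r, and
α = ε/(2r) gives additive error ε. -/
theorem multicalibration_matroid
    {X E : Type*} [Fintype X] [Fintype E] [DecidableEq E]
    (μ : X → ℝ) (hμ0 : ∀ x, 0 ≤ μ x) (hμ1 : ∑ x, μ x = 1)
    (y : X → E → ℝ) (hy : ∀ x e, y x e ∈ Set.Icc (0:ℝ) 1)
    (Indep : Finset E → Prop)
    -- matroid axioms
    (hEmpty : Indep ∅)
    (hSubset : ∀ A B : Finset E, Indep A → B ⊆ A → Indep B)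
    (hExchange : ∀ A B : Finset E, Indep A → Indep B → B.card < A.card →
      ∃ a ∈ A, a ∉ B ∧ Indep (insert a B))
    (r : ℕ) (hrank : ∀ S : Finset E, Indep S → S.card ≤ r)
    (C : Finset ((E → ℝ) → Finset E))
    (hC : ∀ c ∈ C, ∀ w : E → ℝ, Indep (c w))
    (cstar : (E → ℝ) → Finset E)
    (hcstarI : ∀ w : E → ℝ, Indep (cstar w))
    (hcstarOpt : ∀ (w : E → ℝ) (S : Finset E), Indep S →
      ∑ e ∈ S, w e ≤ ∑ e ∈ cstar w, w e)
    (γ γhat : X → E → ℝ)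
    (hγ : ∀ x e, γ x e ∈ Set.Icc (0:ℝ) 1)
    (hγhat : ∀ x e, γhat x e ∈ Set.Icc (0:ℝ) 1)
    (α : ℝ) (hα : 0 ≤ α)
    (ha : ∀ c ∈ C, |∑ x, μ x * ∑ e ∈ c (γ x), (y x e - γhat x e)| ≤ α * r)
    (hb : |∑ x, μ x * ∑ e ∈ cstar (γhat x), (y x e - γhat x e)| ≤ α * r) :
    (∀ c ∈ C,
      ∑ x, μ x * ∑ e ∈ c (γ x), y x e ≤
        2 * α * r + ∑ x, μ x * ∑ e ∈ cstar (γhat x), y x e) ∧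
    (∀ ε : ℝ, 0 < ε → α = ε / (2 * r) → ∀ c ∈ C,
      ∑ x, μ x * ∑ e ∈ c (γ x), y x e ≤
        ε + ∑ x, μ x * ∑ e ∈ cstar (γhat x), y x e) := by
  have main : ∀ c ∈ C,
      ∑ x, μ x * ∑ e ∈ c (γ x), y x e ≤
        2 * α * r + ∑ x, μ x * ∑ e ∈ cstar (γhat x), y x e := by
    intro c hc
    have h1 := abs_le.mp (ha c hc)
    have h2 := abs_le.mp hb
    have key : ∑ x, μ x * ∑ e ∈ c (γ x), γhat x e ≤
        ∑ x, μ x * ∑ e ∈ cstar (γhat x), γhat x e := by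
      apply Finset.sum_le_sum
      intro x _
      exact mul_le_mul_of_nonneg_left (hcstarOpt (γhat x) _ (hC c hc (γ x))) (hμ0 x)
    have e1 : ∀ (f : X → Finset E),
        ∑ x, μ x * ∑ e ∈ f x, (y x e - γhat x e)
        = ∑ x, μ x * ∑ e ∈ f x, y x e - ∑ x, μ x * ∑ e ∈ f x, γhat x e := by
      intro f
      rw [← Finset.sum_sub_distrib]
      congr 1; ext x
      rw [← mul_sub, Finset.sum_sub_distrib]
    have h1' := h1.2
    have h2' := h2.1
    rw [e1] at h1' h2'
    linarith
  refine ⟨main, ?_⟩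
  intro ε hε hαε c hc
  have h := main c hc
  rcases Nat.eq_zero_or_pos r with hr | hr
  · subst hr; simp at h; linarith
  · have : 2 * α * r = ε := by
      rw [hαε]; field_simp
    linarith
end

section
/- Argmax on a calibrated star: suppose k = 2 actions with y : X → [0,1]², and γ̂ : X → [0,1]² satisfies exact multicalibration (α = 0) with respect to the weight family {x ↦ e_{argmax γ̂(x)}} ∪ {x ↦ e_{c(γ(x))} : c ∈ C} for finite C. Then E_x[y_{argmax γ̂(x)}(x)] ≥ max_{c ∈ C} E_x[y_{c(γ(x))}(x)], i.e., the argmax rule on the exactly multicalibrated predictor weakly dominates every rule in C applied to the original predictor γ. -/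
/-- Argmax on a calibrated star (α = 0, two actions): under exact multicalibration,
the argmax rule on γ̂ weakly dominates every rule in C applied to γ. -/
theorem argmax_exact_multicalibration
    {X : Type*} [Fintype X]
    (μ : X → ℝ) (hμ0 : ∀ x, 0 ≤ μ x) (hμ1 : ∑ x, μ x = 1)
    (y : X → Fin 2 → ℝ) (hy : ∀ x i, y x i ∈ Set.Icc (0:ℝ) 1)
    (γ γhat : X → Fin 2 → ℝ)
    (hγ : ∀ x i, γ x i ∈ Set.Icc (0:ℝ) 1)
    (hγhat : ∀ x i, γhat x i ∈ Set.Icc (0:ℝ) 1)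
    (C : Finset ((Fin 2 → ℝ) → Fin 2))
    (am : X → Fin 2)
    (ham : ∀ x i, γhat x i ≤ γhat x (am x))
    (hmc_am : ∑ x, μ x * (y x (am x) - γhat x (am x)) = 0)
    (hmc_C : ∀ c ∈ C, ∑ x, μ x * (y x (c (γ x)) - γhat x (c (γ x))) = 0) :
    ∀ c ∈ C, ∑ x, μ x * y x (c (γ x)) ≤ ∑ x, μ x * y x (am x) := by
  intro c hc
  have h1 : ∑ x, μ x * y x (c (γ x)) = ∑ x, μ x * γhat x (c (γ x)) := by
    have := hmc_C c hc
    simp only [mul_sub, Finset.sum_sub_distrib, sub_eq_zero] at this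
    exact this
  have h2 : ∑ x, μ x * y x (am x) = ∑ x, μ x * γhat x (am x) := by
    simp only [mul_sub, Finset.sum_sub_distrib, sub_eq_zero] at hmc_am
    exact hmc_am
  rw [h1, h2]
  exact Finset.sum_le_sum fun x _ => mul_le_mul_of_nonneg_left (ham x _) (hμ0 x)
end
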